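/- In every finite marriage market with strict preferences there exists a man-optimal stable matching: a stable matching μ such that for every stable matching μ' and every man m, μ(m) ≥_m μ'(m). Moreover, such a man-optimal stable matching is unique. -/

import Mathlib

/-- A matching on a marriage market: `none` stands for being matched to
oneself. -/
def IsMarriageMatching {M W : Type*}
    (μM : M → Option W) (μW : W → Option M) : Prop :=
  ∀ m w, μM m = some w ↔ μW w = some m

/-- Stability of a matching: it is a valid matching, individually rational,
and admits no blocking pair.  `prefM m`/`prefW w` are the strict preference
orders of man `m` over `Option W` and of woman `w` over `Option M`
(`none` = the person themself). -/
def IsStableMarriageMatching {M W : Type*}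
    (prefM : M → Option W → Option W → Prop)
    (prefW : W → Option M → Option M → Prop)
    (μM : M → Option W) (μW : W → Option M) : Prop :=
  IsMarriageMatching μM μW ∧
  (∀ m, ¬ prefM m none (μM m)) ∧
  (∀ w, ¬ prefW w none (μW w)) ∧
  ¬ ∃ (m : M) (w : W), prefM m (some w) (μM m) ∧ prefW w (some m) (μW w)

open scoped Classical
set_option linter.unusedSectionVars false

section STOHelpers
variable {α : Type*} (r : α → α → Prop) [IsStrictTotalOrder α r]

/-- The most-preferred element of a nonempty finite set, where `r a b` means
`a` is strictly preferred to `b`. -/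
noncomputable def stoBest (s : Finset α) (h : s.Nonempty) : α :=
  @Finset.min' _ (@linearOrderOfSTO _ r _ (Classical.decRel r)) s h

lemma stoBest_mem (s : Finset α) (h : s.Nonempty) : stoBest r s h ∈ s :=
  @Finset.min'_mem _ (@linearOrderOfSTO _ r _ (Classical.decRel r)) s h

lemma stoBest_le {s : Finset α} {h : s.Nonempty} {a : α} (ha : a ∈ s) :
    stoBest r s h = a ∨ r (stoBest r s h) a :=
  @Finset.min'_le _ (@linearOrderOfSTO _ r _ (Classical.decRel r)) s a ha

lemma stoBest_subset {s t : Finset α} {h : s.Nonempty} (hst : s ⊆ t) :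
    stoBest r t (h.mono hst) = stoBest r s h ∨
      r (stoBest r t (h.mono hst)) (stoBest r s h) :=
  @Finset.min'_subset _ (@linearOrderOfSTO _ r _ (Classical.decRel r)) s t h hst

lemma sto_asymm {a b : α} (h1 : r a b) (h2 : r b a) : False :=
  absurd (trans_of r h1 h2) (irrefl_of r a)

lemma sto_irrefl (a : α) : ¬ r a a := irrefl_of r a

lemma stoBest_notpref {s : Finset α} {h : s.Nonempty} {a : α} (ha : a ∈ s) :
    ¬ r a (stoBest r s h) := by
  rcases stoBest_le r ha with he | hlt
  · rw [he]; exact sto_irrefl r a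
  · exact fun hc => sto_asymm r hc hlt

lemma stoBest_strict {s : Finset α} {h : s.Nonempty} {a : α} (ha : a ∈ s)
    (hne : stoBest r s h ≠ a) : r (stoBest r s h) a :=
  (stoBest_le r ha).resolve_left hne

end STOHelpers

section GS
variable {M W : Type*} [Fintype M] [Fintype W]
  (prefM : M → Option W → Option W → Prop)
  (prefW : W → Option M → Option M → Prop)
  (hM : ∀ m, IsStrictTotalOrder (Option W) (prefM m))
  (hW : ∀ w, IsStrictTotalOrder (Option M) (prefW w))

/-- The options still available to man `m`, given rejection set `R`. -/
noncomputable def gsSm (R : Finset (M × W)) (m : M) : Finset (Option W) :=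
  insert none ((Finset.univ.filter fun w => (m, w) ∉ R).image some)

lemma gsSm_nonempty (R : Finset (M × W)) (m : M) : (gsSm R m).Nonempty :=
  ⟨none, Finset.mem_insert_self _ _⟩

lemma mem_gsSm {R : Finset (M × W)} {m : M} {w : W} :
    some w ∈ gsSm R m ↔ (m, w) ∉ R := by
  simp [gsSm]

lemma none_mem_gsSm (R : Finset (M × W)) (m : M) : (none : Option W) ∈ gsSm R m :=
  Finset.mem_insert_self _ _

lemma gsSm_anti {R R' : Finset (M × W)} (h : R ⊆ R') (m : M) :
    gsSm R' m ⊆ gsSm R m := by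
  intro x hx
  rcases x with _ | w
  · exact none_mem_gsSm R m
  · exact mem_gsSm.2 fun hc => mem_gsSm.1 hx (h hc)

/-- The woman (or `none`) man `m` currently proposes to. -/
noncomputable def gsBest (R : Finset (M × W)) (m : M) : Option W :=
  haveI := hM m
  stoBest (prefM m) (gsSm R m) (gsSm_nonempty R m)

lemma gsBest_notrej {R : Finset (M × W)} {m : M} {w : W}
    (h : gsBest prefM hM R m = some w) : (m, w) ∉ R := by
  haveI := hM m
  have := stoBest_mem (prefM m) (gsSm R m) (gsSm_nonempty R m)
  rw [gsBest] at h
  rw [h] at this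
  exact mem_gsSm.1 this

lemma gsBest_le {R : Finset (M × W)} {m : M} {a : Option W} (ha : a ∈ gsSm R m) :
    gsBest prefM hM R m = a ∨ prefM m (gsBest prefM hM R m) a := by
  haveI := hM m
  exact stoBest_le (prefM m) ha

lemma gsBest_ir (R : Finset (M × W)) (m : M) :
    ¬ prefM m none (gsBest prefM hM R m) := by
  haveI := hM m
  exact stoBest_notpref (prefM m) (none_mem_gsSm R m)

/-- The proposals woman `w` can choose from. -/
noncomputable def gsTw (R : Finset (M × W)) (w : W) : Finset (Option M) :=
  insert none ((Finset.univ.filter fun m => gsBest prefM hM R m = some w).image some)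

lemma gsTw_nonempty (R : Finset (M × W)) (w : W) : (gsTw prefM hM R w).Nonempty :=
  ⟨none, Finset.mem_insert_self _ _⟩

lemma mem_gsTw {R : Finset (M × W)} {w : W} {m : M} :
    some m ∈ gsTw prefM hM R w ↔ gsBest prefM hM R m = some w := by
  simp [gsTw]

/-- The man (or `none`) woman `w` currently holds. -/
noncomputable def gsAcc (R : Finset (M × W)) (w : W) : Option M :=
  haveI := hW w
  stoBest (prefW w) (gsTw prefM hM R w) (gsTw_nonempty prefM hM R w)

lemma gsAcc_prop {R : Finset (M × W)} {w : W} {m : M}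
    (h : gsAcc prefM prefW hM hW R w = some m) : gsBest prefM hM R m = some w := by
  haveI := hW w
  have := stoBest_mem (prefW w) (gsTw prefM hM R w) (gsTw_nonempty prefM hM R w)
  rw [gsAcc] at h
  rw [h] at this
  exact (mem_gsTw _ _).1 this

lemma gsAcc_le {R : Finset (M × W)} {w : W} {a : Option M}
    (ha : a ∈ gsTw prefM hM R w) :
    gsAcc prefM prefW hM hW R w = a ∨ prefW w (gsAcc prefM prefW hM hW R w) a := by
  haveI := hW w
  exact stoBest_le (prefW w) ha

lemma gsAcc_ir (R : Finset (M × W)) (w : W) :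
    ¬ prefW w none (gsAcc prefM prefW hM hW R w) := by
  haveI := hW w
  exact stoBest_notpref (prefW w) (Finset.mem_insert_self _ _)

/-- One round of deferred acceptance: record all new rejections. -/
noncomputable def gsStep (R : Finset (M × W)) : Finset (M × W) :=
  R ∪ Finset.univ.filter (fun p =>
    gsBest prefM hM R p.1 = some p.2 ∧ gsAcc prefM prefW hM hW R p.2 ≠ some p.1)

lemma subset_gsStep (R : Finset (M × W)) : R ⊆ gsStep prefM prefW hM hW R :=
  Finset.subset_union_left

lemma mem_gsStep {R : Finset (M × W)} {m : M} {w : W} :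
    (m, w) ∈ gsStep prefM prefW hM hW R ↔
      (m, w) ∈ R ∨ (gsBest prefM hM R m = some w ∧
        gsAcc prefM prefW hM hW R w ≠ some m) := by
  simp [gsStep]

noncomputable def gsR (n : ℕ) : Finset (M × W) :=
  (gsStep prefM prefW hM hW)^[n] ∅

lemma gsR_succ (n : ℕ) :
    gsR prefM prefW hM hW (n + 1) = gsStep prefM prefW hM hW (gsR prefM prefW hM hW n) :=
  Function.iterate_succ_apply' _ _ _

lemma gsR_mono (n : ℕ) : gsR prefM prefW hM hW n ⊆ gsR prefM prefW hM hW (n + 1) := by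
  rw [gsR_succ]; exact subset_gsStep _ _ _ _ _

/-- The algorithm reaches a fixed point. -/
lemma gs_exists_fix : ∃ n, gsStep prefM prefW hM hW (gsR prefM prefW hM hW n)
    = gsR prefM prefW hM hW n := by
  by_contra hc
  push_neg at hc
  have hcard : ∀ n, n ≤ (gsR prefM prefW hM hW n).card := by
    intro n
    induction n with
    | zero => exact Nat.zero_le _
    | succ k ih =>
      have hsub := gsR_mono prefM prefW hM hW k
      have hne : gsR prefM prefW hM hW k ≠ gsR prefM prefW hM hW (k + 1) := by
        rw [gsR_succ]; exact fun h => hc k h.symm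
      have := Finset.card_lt_card (Finset.ssubset_iff_subset_ne.2 ⟨hsub, hne⟩)
      omega
  have h1 := hcard (Fintype.card (M × W) + 1)
  have h2 : (gsR prefM prefW hM hW (Fintype.card (M × W) + 1)).card
      ≤ Fintype.card (M × W) := Finset.card_le_univ _
  omega

/-- Weak preference for woman `w`. -/
def gwpref (w : W) (a b : Option M) : Prop := a = b ∨ prefW w a b

include hW in
lemma gwpref_trans {w : W} {a b c : Option M} (h1 : gwpref prefW w a b)
    (h2 : gwpref prefW w b c) : gwpref prefW w a c := by
  haveI := hW w
  rcases h1 with rfl | h1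
  · exact h2
  rcases h2 with rfl | h2
  · exact Or.inr h1
  · exact Or.inr (trans_of (prefW w) h1 h2)

/-- Along the algorithm, each woman's held partner weakly improves. -/
lemma gsAcc_improves (n : ℕ) (w : W) :
    gwpref prefW w (gsAcc prefM prefW hM hW (gsR prefM prefW hM hW (n + 1)) w)
      (gsAcc prefM prefW hM hW (gsR prefM prefW hM hW n) w) := by
  set R := gsR prefM prefW hM hW n with hR
  set R' := gsR prefM prefW hM hW (n + 1) with hR'
  have hRR' : R' = gsStep prefM prefW hM hW R := gsR_succ prefM prefW hM hW n
  rcases ha : gsAcc prefM prefW hM hW R w with _ | m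
  · -- previously held none: anything is weakly better than none
    exact gsAcc_le prefM prefW hM hW (Finset.mem_insert_self _ _)
  · -- previously held m: m still proposes to w in R'
    have hb : gsBest prefM hM R m = some w := gsAcc_prop prefM prefW hM hW ha
    have hnotin : (m, w) ∉ R' := by
      rw [hRR', mem_gsStep]
      rintro (h | ⟨-, h2⟩)
      · exact gsBest_notrej prefM hM hb h
      · exact h2 ha
    have hmem : some w ∈ gsSm R' m := mem_gsSm.2 hnotin
    have hb' : gsBest prefM hM R' m = some w := by
      haveI := hM m
      rcases gsBest_le prefM hM hmem with he | hlt
      · exact he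
      · -- gsBest R' strictly prefers over some w; but gsBest R' ∈ gsSm R ⊆ all,
        -- so gsBest R ⪰ gsBest R', and gsBest R = some w gives contradiction
        exfalso
        have hsub : gsSm R' m ⊆ gsSm R m := by
          apply gsSm_anti
          rw [hRR']; exact subset_gsStep _ _ _ _ _
        have hmem2 : gsBest prefM hM R' m ∈ gsSm R m := by
          apply hsub
          exact stoBest_mem (prefM m) (gsSm R' m) (gsSm_nonempty R' m)
        rcases gsBest_le prefM hM hmem2 with he2 | hlt2
        · rw [hb] at he2; rw [← he2] at hlt
          exact sto_irrefl (prefM m) _ hlt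
        · rw [hb] at hlt2
          exact sto_asymm (prefM m) hlt hlt2
    have hmemT : some m ∈ gsTw prefM hM R' w := (mem_gsTw _ _).2 hb'
    exact gsAcc_le prefM prefW hM hW hmemT

/-- If `w` rejected `m`, then `w` currently holds someone strictly better. -/
lemma gs_rej_inv (n : ℕ) {m : M} {w : W} (h : (m, w) ∈ gsR prefM prefW hM hW n) :
    prefW w (gsAcc prefM prefW hM hW (gsR prefM prefW hM hW n) w) (some m) := by
  haveI := hW w
  induction n with
  | zero => simp [gsR] at h
  | succ k ih =>
    have himp := gsAcc_improves prefM prefW hM hW k w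
    rw [gsR_succ, mem_gsStep] at h
    rcases h with h | ⟨hb, hne⟩
    · have := ih h
      rcases himp with he | hlt
      · rw [he]; exact this
      · exact trans_of (prefW w) hlt this
    · have hmemT : some m ∈ gsTw prefM hM (gsR prefM prefW hM hW k) w := (mem_gsTw _ _).2 hb
      have hstrict : prefW w (gsAcc prefM prefW hM hW (gsR prefM prefW hM hW k) w) (some m) :=
        (gsAcc_le prefM prefW hM hW hmemT).resolve_left hne
      rcases himp with he | hlt
      · rw [he]; exact hstrict
      · exact trans_of (prefW w) hlt hstrict

/-- Key lemma: no recorded rejection involves a stably-achievable pair. -/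
lemma gs_unachievable (n : ℕ) (νM : M → Option W) (νW : W → Option M)
    (hν : IsStableMarriageMatching prefM prefW νM νW) :
    ∀ m w, (m, w) ∈ gsR prefM prefW hM hW n → νM m ≠ some w := by
  obtain ⟨hmatch, hirM, hirW, hblock⟩ := hν
  induction n with
  | zero => intro m w h; simp [gsR] at h
  | succ k ih =>
    intro m w h hνm
    rw [gsR_succ, mem_gsStep] at h
    rcases h with h | ⟨hb, hne⟩
    · exact ih m w h hνm
    · set R := gsR prefM prefW hM hW k with hRdef
      have hνw : νW w = some m := (hmatch m w).1 hνm
      rcases ha : gsAcc prefM prefW hM hW R w with _ | m'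
      · -- w holds none yet rejects m ⇒ none ≻_w m ⇒ ν not individually rational
        have hmemT : some m ∈ gsTw prefM hM R w := (mem_gsTw _ _).2 hb
        have hstrict : prefW w none (some m) := by
          have := (gsAcc_le prefM prefW hM hW hmemT).resolve_left (by rw [ha] at hne ⊢; exact hne)
          rwa [ha] at this
        exact hirW w (by rw [hνw]; exact hstrict)
      · -- w holds m' ≻_w m; (m', w) blocks ν
        have hb' : gsBest prefM hM R m' = some w := gsAcc_prop prefM prefW hM hW ha
        have hm'w : prefW w (some m') (some m) := by
          have hmemT : some m ∈ gsTw prefM hM R w := (mem_gsTw _ _).2 hb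
          have := (gsAcc_le prefM prefW hM hW hmemT).resolve_left (by rw [ha] at hne ⊢; exact hne)
          rwa [ha] at this
        have hνm' : νM m' ≠ some w := by
          intro hc
          have : νW w = some m' := (hmatch m' w).1 hc
          rw [hνw] at this
          injection this with hmm
          rw [hmm] at hm'w
          haveI := hW w
          exact sto_irrefl (prefW w) _ hm'w
        -- νM m' is still available to m' at R
        have hmem : νM m' ∈ gsSm R m' := by
          rcases hc : νM m' with _ | w''
          · exact none_mem_gsSm R m'
          · exact mem_gsSm.2 fun hin => ih m' w'' hin hc
        have hpref : prefM m' (some w) (νM m') := by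
          have := gsBest_le prefM hM hmem
          rw [hb'] at this
          exact this.resolve_left fun he => hνm' he.symm
        exact hblock ⟨m', w, hpref, by rw [hνw]; exact hm'w⟩

end GS

theorem man_optimal_stable_matching_exists_unique
    {M W : Type*} [Fintype M] [Fintype W]
    (prefM : M → Option W → Option W → Prop)
    (prefW : W → Option M → Option M → Prop)
    (hM : ∀ m, IsStrictTotalOrder (Option W) (prefM m))
    (hW : ∀ w, IsStrictTotalOrder (Option M) (prefW w)) :
    ∃ (μM : M → Option W) (μW : W → Option M),
      -- μ is stable and man-optimal
      (IsStableMarriageMatching prefM prefW μM μW ∧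
        ∀ (νM : M → Option W) (νW : W → Option M),
          IsStableMarriageMatching prefM prefW νM νW →
          ∀ m, μM m = νM m ∨ prefM m (μM m) (νM m)) ∧
      -- uniqueness of the man-optimal stable matching
      (∀ (νM : M → Option W) (νW : W → Option M),
        (IsStableMarriageMatching prefM prefW νM νW ∧
          ∀ (ρM : M → Option W) (ρW : W → Option M),
            IsStableMarriageMatching prefM prefW ρM ρW →
            ∀ m, νM m = ρM m ∨ prefM m (νM m) (ρM m)) →
        νM = μM ∧ νW = μW) := by
  obtain ⟨n, hfix⟩ := gs_exists_fix prefM prefW hM hW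
  set R := gsR prefM prefW hM hW n with hRdef
  set μM : M → Option W := fun m => gsBest prefM hM R m with hμM
  set μW : W → Option M := fun w => gsAcc prefM prefW hM hW R w with hμW
  -- matching property
  have hmatch : IsMarriageMatching μM μW := by
    intro m w
    constructor
    · intro h
      by_contra hne
      have : (m, w) ∈ gsStep prefM prefW hM hW R :=
        (mem_gsStep prefM prefW hM hW).2 (Or.inr ⟨h, hne⟩)
      rw [hfix] at this
      exact gsBest_notrej prefM hM h this
    · intro h
      exact gsAcc_prop prefM prefW hM hW h
  -- stability
  have hstable : IsStableMarriageMatching prefM prefW μM μW := by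
    refine ⟨hmatch, fun m => gsBest_ir prefM hM R m,
      fun w => gsAcc_ir prefM prefW hM hW R w, ?_⟩
    rintro ⟨m, w, h1, h2⟩
    have hin : (m, w) ∈ R := by
      by_contra hnin
      have hmem : some w ∈ gsSm R m := mem_gsSm.2 hnin
      haveI := hM m
      have h1' : prefM m (some w) (gsBest prefM hM R m) := h1
      rcases gsBest_le prefM hM hmem with he | hlt
      · rw [he] at h1'
        exact sto_irrefl (prefM m) _ h1'
      · exact sto_asymm (prefM m) h1' hlt
    haveI := hW w
    have hrej := gs_rej_inv prefM prefW hM hW n hin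
    exact sto_asymm (prefW w) h2 hrej
  -- optimality
  have hopt : ∀ (νM : M → Option W) (νW : W → Option M),
      IsStableMarriageMatching prefM prefW νM νW →
      ∀ m, μM m = νM m ∨ prefM m (μM m) (νM m) := by
    intro νM νW hν m
    have hmem : νM m ∈ gsSm R m := by
      rcases hc : νM m with _ | w'
      · exact none_mem_gsSm R m
      · exact mem_gsSm.2 fun hin =>
          gs_unachievable prefM prefW hM hW n νM νW hν m w' hin hc
    exact gsBest_le prefM hM hmem
  refine ⟨μM, μW, ⟨hstable, hopt⟩, ?_⟩
  -- uniqueness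
  rintro νM νW ⟨hνstable, hνopt⟩
  have hMeq : νM = μM := by
    funext m
    rcases hνopt μM μW hstable m with he | hlt
    · exact he
    · rcases hopt νM νW hνstable m with he | hlt2
      · exact he.symm
      · haveI := hM m
        exact absurd (trans_of (prefM m) hlt hlt2) (irrefl_of (prefM m) _)
  refine ⟨hMeq, ?_⟩
  funext w
  rcases hc : μW w with _ | m
  · rcases hc2 : νW w with _ | m2
    · rfl
    · exfalso
      have : νM m2 = some w := (hνstable.1 m2 w).2 hc2
      rw [hMeq] at this
      have := (hmatch m2 w).1 this
      rw [hc] at this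
      exact Option.some_ne_none _ this.symm
  · have : μM m = some w := (hmatch m w).2 hc
    rw [← hMeq] at this
    exact (hνstable.1 m w).1 this
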